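/- Let φ = C₁ ∧ … ∧ C_m be a monotone 3-CNF formula, let Z_φ and Z'_φ be the zones constructed from it, and let M_φ = 14(m+2). Then φ is satisfiable if and only if (Z_φ, ∅) does not entail (Z'_φ, ∅) with respect to ⊨_{M_φ}, i.e., if and only if there exists a configuration γ' satisfying (Z'_φ, ∅) such that for every configuration γ satisfying (Z_φ, ∅) and every subset γ'' ⊆ γ', γ is not region equivalent (≃_{M_φ}) to γ''. -/
import Mathlib


open scoped Classical NNReal

namespace ATAPaper

/-! ## Intervals with natural endpoints (possibly unbounded) -/

inductive NInterval where
  | cc (a b : ℕ)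
  | co (a b : ℕ)
  | oc (a b : ℕ)
  | oo (a b : ℕ)
  | ci (a : ℕ)
  | oi (a : ℕ)
deriving DecidableEq

/-- Membership of a nonnegative real in an interval. -/
def NInterval.mem (v : ℝ≥0) : NInterval → Prop
  | .cc a b => (a : ℝ≥0) ≤ v ∧ v ≤ (b : ℝ≥0)
  | .co a b => (a : ℝ≥0) ≤ v ∧ v < (b : ℝ≥0)
  | .oc a b => (a : ℝ≥0) < v ∧ v ≤ (b : ℝ≥0)
  | .oo a b => (a : ℝ≥0) < v ∧ v < (b : ℝ≥0)
  | .ci a => (a : ℝ≥0) ≤ v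
  | .oi a => (a : ℝ≥0) < v

/-- The largest constant appearing in an interval. -/
def NInterval.bound : NInterval → ℕ
  | .cc a b | .co a b | .oc a b | .oo a b => max a b
  | .ci a | .oi a => a

/-! ## Transition formulas `Φ(Q)` with reset `x.φ` and deactivation `x̄.φ` -/

inductive TF (Q : Type*) where
  | tt
  | ff
  | loc (q : Q)
  | guard (I : NInterval)
  | and (φ ψ : TF Q)
  | or (φ ψ : TF Q)
  | reset (φ : TF Q)
  | deact (φ : TF Q)

/-- A state of a 1-ATA is a location together with a clock value which is
either inactive (`none` = ⊥) or a nonnegative real.  A configuration is a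
finite set of states. -/
abbrev Config (Q : Type*) := Finset (Q × Option ℝ≥0)

section BasicDefs

variable {Q A : Type*}

/-- `M ⊨_v φ`. -/
def TF.sat (M : Config Q) : TF Q → Option ℝ≥0 → Prop
  | .tt, _ => True
  | .ff, _ => False
  | .loc q, v => (q, v) ∈ M
  | .guard I, v => v = none ∨ ∃ r, v = some r ∧ I.mem r
  | .and φ ψ, v => φ.sat M v ∧ ψ.sat M v
  | .or φ ψ, v => φ.sat M v ∨ ψ.sat M v
  | .reset φ, _ => φ.sat M (some 0)
  | .deact φ, _ => φ.sat M none

/-- `M` is a minimal model of `φ` on `v`. -/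
def MinModel (M : Config Q) (v : Option ℝ≥0) (φ : TF Q) : Prop :=
  φ.sat M v ∧ ∀ M' ⊂ M, ¬ φ.sat M' v

/-- The disjuncts of a formula (assumed to be in disjunctive normal form). -/
def TF.disjuncts : TF Q → List (TF Q)
  | .or φ ψ => φ.disjuncts ++ ψ.disjuncts
  | φ => [φ]

/-- The intervals occurring (anywhere) in a transition formula. -/
def TF.guards : TF Q → List NInterval
  | .guard I => [I]
  | .and φ ψ | .or φ ψ => φ.guards ++ ψ.guards
  | .reset φ | .deact φ => φ.guards
  | _ => []

/-! ## One-clock alternating timed automata with deactivation -/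

structure OneATA (Q A : Type*) where
  init : Q
  final : Set Q
  delta : Q → A → Option (TF Q)

/-- `C` is one of the disjuncts of `δ(q,a)`. -/
def OneATA.isTarget (𝒜 : OneATA Q A) (q : Q) (a : A) (C : TF Q) : Prop :=
  ∃ φ, 𝒜.delta q a = some φ ∧ C ∈ φ.disjuncts

/-- Time elapse on a configuration: add `d` to every active value, keep `⊥`. -/
noncomputable def Config.delay (γ : Config Q) (d : ℝ≥0) : Config Q :=
  γ.image (fun s => (s.1, s.2.map (· + d)))

/-- Discrete transition `γ →^{a,C} γ'` where the target `χ` assigns to each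
state of `γ` a disjunct of the corresponding transition formula. -/
def OneATA.DStep (𝒜 : OneATA Q A) (γ : Config Q) (a : A)
    (χ : Q × Option ℝ≥0 → TF Q) (γ' : Config Q) : Prop :=
  (∀ s ∈ γ, 𝒜.isTarget s.1 a (χ s)) ∧
  ∃ Mo : Q × Option ℝ≥0 → Config Q,
    (∀ s ∈ γ, MinModel (Mo s) s.2 (χ s)) ∧ γ' = γ.biUnion Mo

/-- Combined transition `γ →^{d,a,C} γ'`. -/
def OneATA.Step (𝒜 : OneATA Q A) (γ : Config Q) (d : ℝ≥0) (a : A)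
    (χ : Q × Option ℝ≥0 → TF Q) (γ' : Config Q) : Prop :=
  𝒜.DStep (γ.delay d) a χ γ'

/-- A configuration is accepting if all its locations are accepting. -/
def OneATA.AcceptingCfg (𝒜 : OneATA Q A) (γ : Config Q) : Prop :=
  ∀ s ∈ γ, s.1 ∈ 𝒜.final

/-- Accepting runs on (finite) timed words. -/
inductive OneATA.AccRun (𝒜 : OneATA Q A) : Config Q → List (ℝ≥0 × A) → Prop
  | nil {γ} : 𝒜.AcceptingCfg γ → 𝒜.AccRun γ []
  | cons {γ γ' : Config Q} {d : ℝ≥0} {a : A} {w : List (ℝ≥0 × A)}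
      (χ : Q × Option ℝ≥0 → TF Q) :
      𝒜.Step γ d a χ γ' → 𝒜.AccRun γ' w → 𝒜.AccRun γ ((d, a) :: w)

/-- The language of a 1-ATA. -/
def OneATA.Lang (𝒜 : OneATA Q A) : Set (List (ℝ≥0 × A)) :=
  {w | 𝒜.AccRun {(𝒜.init, some 0)} w}

/-- Reachability between configurations by timed and discrete transitions. -/
inductive OneATA.Reach (𝒜 : OneATA Q A) : Config Q → Config Q → Prop
  | refl (γ) : 𝒜.Reach γ γ
  | delay {γ γ'} (d : ℝ≥0) : 𝒜.Reach γ γ' → 𝒜.Reach γ (γ'.delay d)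
  | step {γ γ' γ''} (a : A) (χ) : 𝒜.Reach γ γ' → 𝒜.DStep γ' a χ γ'' → 𝒜.Reach γ γ''

/-- The width of a configuration: the number of active states. -/
noncomputable def Config.width (γ : Config Q) : ℕ :=
  (γ.filter (fun s => s.2 ≠ none)).card

/-- The 1-ATA has width at most `k`. -/
def OneATA.WidthBounded (𝒜 : OneATA Q A) (k : ℕ) : Prop :=
  ∀ γ, 𝒜.Reach {(𝒜.init, some 0)} γ → γ.width ≤ k

/-- All constants appearing in the automaton are at most `M`. -/
def OneATA.BoundedBy (𝒜 : OneATA Q A) (M : ℕ) : Prop :=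
  ∀ q a φ, 𝒜.delta q a = some φ → ∀ I ∈ φ.guards, I.bound ≤ M

/-! ## Region equivalence and entailment on configurations -/

/-- `γ ≃_M γ'` via the bijection `h`. -/
def RegionEquivWith (M : ℕ) (γ γ' : Config Q)
    (h : Q × Option ℝ≥0 → Q × Option ℝ≥0) : Prop :=
  Set.BijOn h ↑γ ↑γ' ∧
  (∀ s ∈ γ, (h s).1 = s.1) ∧
  (∀ s ∈ γ, ((h s).2 = none ↔ s.2 = none)) ∧
  (∀ s ∈ γ, ∀ r r', s.2 = some r → (h s).2 = some r' →
    ((r ≤ (M : ℝ≥0)) ↔ (r' ≤ (M : ℝ≥0))) ∧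
    (r ≤ (M : ℝ≥0) →
      (⌊(r : ℝ)⌋ = ⌊(r' : ℝ)⌋ ∧ (Int.fract (r : ℝ) = 0 ↔ Int.fract (r' : ℝ) = 0)))) ∧
  (∀ s₁ ∈ γ, ∀ s₂ ∈ γ, ∀ r₁ r₂ r₁' r₂',
    s₁.2 = some r₁ → s₂.2 = some r₂ → (h s₁).2 = some r₁' → (h s₂).2 = some r₂' →
    r₁ ≤ (M : ℝ≥0) → r₂ ≤ (M : ℝ≥0) →
    (Int.fract (r₁ : ℝ) ≤ Int.fract (r₂ : ℝ) ↔ Int.fract (r₁' : ℝ) ≤ Int.fract (r₂' : ℝ)))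

/-- Region equivalence `γ ≃_M γ'`. -/
def RegionEquiv (M : ℕ) (γ γ' : Config Q) : Prop := ∃ h, RegionEquivWith M γ γ' h

/-- Configuration entailment `γ ⊨_M γ'` : some subset of `γ'` is region equivalent
to `γ`. -/
def CfgEntails (M : ℕ) (γ γ' : Config Q) : Prop :=
  ∃ γ'' ⊆ γ', RegionEquiv M γ γ''

end BasicDefs


/-! ## MTL (negation normal form) -/

inductive MTL (A : Type*) where
  | atom (a : A)
  | natom (a : A)
  | conj (φ ψ : MTL A)
  | disj (φ ψ : MTL A)
  | next (I : NInterval) (φ : MTL A)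
  | untl (I : NInterval) (φ ψ : MTL A)

section MTLDefs

variable {A : Type*}

/-- Accumulated time `Σ_{c=1}^{p} d_c` of the first `p` letters of a timed word. -/
def twtime (w : List (ℝ≥0 × A)) (p : ℕ) : ℝ≥0 := ((w.take p).map Prod.fst).sum

/-- `(w, i) ⊨ φ` (positions are 0-based). -/
def MTL.holdsAt (w : List (ℝ≥0 × A)) : MTL A → ℕ → Prop
  | .atom a, i => ∃ h : i < w.length, (w.get ⟨i, h⟩).2 = a
  | .natom a, i => ∃ h : i < w.length, (w.get ⟨i, h⟩).2 ≠ a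
  | .conj φ ψ, i => φ.holdsAt w i ∧ ψ.holdsAt w i
  | .disj φ ψ, i => φ.holdsAt w i ∨ ψ.holdsAt w i
  | .next I φ, i => ∃ h : i + 1 < w.length, φ.holdsAt w (i + 1) ∧ I.mem (w.get ⟨i + 1, h⟩).1
  | .untl I φ ψ, i => ∃ k, i ≤ k ∧ k < w.length ∧ ψ.holdsAt w k ∧
      I.mem (twtime w (k + 1) - twtime w (i + 1)) ∧
      ∀ j, i ≤ j → j < k → φ.holdsAt w j

/-- The language of an MTL formula (`w ⊨ φ` iff `φ` holds at the first position). -/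
def MTL.Lang (φ : MTL A) : Set (List (ℝ≥0 × A)) := {w | φ.holdsAt w 0}

/-- Pure LTL formulas: every interval is `[0, ∞)`. -/
def MTL.isPure : MTL A → Bool
  | .atom _ | .natom _ => true
  | .conj φ ψ | .disj φ ψ => φ.isPure && ψ.isPure
  | .next I φ => decide (I = NInterval.ci 0) && φ.isPure
  | .untl I φ ψ => decide (I = NInterval.ci 0) && φ.isPure && ψ.isPure

/-- The subformulas of an MTL formula. -/
def MTL.subfs : MTL A → List (MTL A)
  | .atom a => [.atom a]
  | .natom a => [.natom a]
  | .conj φ ψ => .conj φ ψ :: (φ.subfs ++ ψ.subfs)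
  | .disj φ ψ => .disj φ ψ :: (φ.subfs ++ ψ.subfs)
  | .next I φ => .next I φ :: φ.subfs
  | .untl I φ ψ => .untl I φ ψ :: (φ.subfs ++ ψ.subfs)

/-- One-sided MTL: in every Until, the left argument is a pure LTL formula. -/
def MTL.oneSided : MTL A → Prop
  | .atom _ | .natom _ => True
  | .conj φ ψ | .disj φ ψ => φ.oneSided ∧ ψ.oneSided
  | .next _ φ => φ.oneSided
  | .untl _ φ ψ => φ.isPure = true ∧ ψ.oneSided

/-! ## The MTL-to-1-ATA construction with deactivation -/

/-- Locations of the constructed automaton: the initial location `φ_init`,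
locations for formulas (in particular Until subformulas and `φ` itself), and
locations `(X_I ψ)ʳ`. -/
inductive MLoc (A : Type*) where
  | start
  | form (ψ : MTL A)
  | nextr (I : NInterval) (ψ : MTL A)

/-- Prefix `x̄.` if `ψ` is pure LTL, and nothing otherwise. -/
def barP (ψ : MTL A) (φ : TF (MLoc A)) : TF (MLoc A) :=
  if ψ.isPure then .deact φ else φ

/-- Prefix `x̄.` if `ψ` is pure LTL, and `x.` otherwise. -/
def rhoP (ψ : MTL A) (φ : TF (MLoc A)) : TF (MLoc A) :=
  if ψ.isPure then .deact φ else .reset φ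

variable [DecidableEq A]

/-- The transition formula `δ(ψ, a)` for subformulas `ψ`. -/
def dform : MTL A → A → TF (MLoc A)
  | .atom b, a => if b = a then .tt else .ff
  | .natom b, a => if b = a then .ff else .tt
  | .conj φ ψ, a => .and (barP φ (dform φ a)) (barP ψ (dform ψ a))
  | .disj φ ψ, a => .or (barP φ (dform φ a)) (barP ψ (dform ψ a))
  | .next I ψ, _ => .reset (.loc (.nextr I ψ))
  | .untl I φ ψ, a =>
      .or (.and (rhoP ψ (dform ψ a)) (.guard I))
          (.and (rhoP φ (dform φ a)) (.loc (.form (.untl I φ ψ))))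

/-- The transition function of the constructed automaton `A'_φ`. -/
def mlocDelta (φ₀ : MTL A) : MLoc A → A → Option (TF (MLoc A))
  | .start, a => some (rhoP φ₀ (dform φ₀ a))
  | .form ψ, a => some (dform ψ a)
  | .nextr I ψ, a => some (.and (.guard I) (rhoP ψ (dform ψ a)))

/-- The 1-ATA `A'_φ` constructed from an MTL formula `φ`:
initial location `φ_init`, no accepting locations. -/
def ataOf (φ : MTL A) : OneATA (MLoc A) A :=
  { init := .start, final := ∅, delta := mlocDelta φ }

end MTLDefs

section KB
variable {A : Type*}
/-- The recursive width bound `k_ψ`. -/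
def kBound : MTL A → ℕ
  | .atom _ | .natom _ => 1
  | .conj φ ψ => if (MTL.conj φ ψ).isPure then 1 else kBound φ + kBound ψ
  | .disj φ ψ => if (MTL.disj φ ψ).isPure then 1 else max (kBound φ) (kBound ψ)
  | .next I φ => if (MTL.next I φ).isPure then 1 else kBound φ
  | .untl I φ ψ => if (MTL.untl I φ ψ).isPure then 1 else kBound ψ
end KB


/-! ## Zones (variables `x_{q,i}`), nodes and their configuration semantics -/

section ZoneDefs

variable {Q A : Type*}

/-- A (semantic) zone: a finite set of variables `x_{q,i}` together with the
set of valuations satisfying its constraints. -/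
structure SemZone (Q : Type*) where
  vars : Finset (Q × ℕ)
  val : ((Q × ℕ) → ℝ≥0) → Prop

/-- `γ` satisfies the node `(Z, IA)` via the surjection `h`. -/
def NodeSatVia (Z : SemZone Q) (IA : Finset (Q × ℕ)) (γ : Config Q)
    (h : Q × ℕ → Q × Option ℝ≥0) : Prop :=
  (∀ y ∈ Z.vars ∪ IA, (h y).1 = y.1) ∧
  (∀ y ∈ Z.vars ∪ IA, h y ∈ γ) ∧
  (∀ s ∈ γ, ∃ y ∈ Z.vars ∪ IA, h y = s) ∧
  (∀ y ∈ IA, (h y).2 = none) ∧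
  ∃ ν : (Q × ℕ) → ℝ≥0, (∀ y ∈ Z.vars, (h y).2 = some (ν y)) ∧ Z.val ν

/-- `γ ∈ ⟦(Z, IA)⟧`. -/
def NodeSat (Z : SemZone Q) (IA : Finset (Q × ℕ)) (γ : Config Q) : Prop :=
  ∃ h, NodeSatVia Z IA γ h

/-- The special empty node `(Z_∅, {})`, satisfied exactly by the empty
configuration. -/
def emptySemZone {Q : Type*} : SemZone Q := ⟨∅, fun _ => True⟩

/-- The initial node `((x_{q₀,1} = 0), ∅)`. -/
def initSemZone (𝒜 : OneATA Q A) : SemZone Q :=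
  ⟨{(𝒜.init, 1)}, fun ν => ν (𝒜.init, 1) = 0⟩

/-! ### Simple clauses and the successor computation -/

/-- A clause is a conjunction of atoms of the form `true`, `false`, `q`, `I`,
`x.q`, `x̄.q`. -/
def TF.isSimpleConj : TF Q → Bool
  | .tt => true
  | .ff => true
  | .loc _ => true
  | .guard _ => true
  | .reset (.loc _) => true
  | .deact (.loc _) => true
  | .and φ ψ => φ.isSimpleConj && ψ.isSimpleConj
  | _ => false

/-- Every transition formula of the automaton is in disjunctive normal form. -/
def OneATA.normalized (𝒜 : OneATA Q A) : Prop :=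
  ∀ q a φ, 𝒜.delta q a = some φ → ∀ C ∈ φ.disjuncts, C.isSimpleConj = true

/-- The interval atoms of a clause. -/
def TF.topGuards : TF Q → List NInterval
  | .guard I => [I]
  | .and φ ψ => φ.topGuards ++ ψ.topGuards
  | _ => []

/-- The location atoms `q` of a clause. -/
def TF.atomLocs : TF Q → List Q
  | .loc q => [q]
  | .and φ ψ => φ.atomLocs ++ ψ.atomLocs
  | _ => []

/-- The reset atoms `x.q` of a clause. -/
def TF.resetLocs : TF Q → List Q
  | .reset (.loc q) => [q]
  | .and φ ψ => φ.resetLocs ++ ψ.resetLocs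
  | _ => []

/-- The deactivation atoms `x̄.q` of a clause. -/
def TF.deactLocs : TF Q → List Q
  | .deact (.loc q) => [q]
  | .and φ ψ => φ.deactLocs ++ ψ.deactLocs
  | _ => []

/-- The inactive variable set of the successor node: `x'_{q,0}` for every atom
`x̄.q`, and for every atom `q` of a clause of an inactive variable. -/
noncomputable def succIA (Z : SemZone Q) (IA : Finset (Q × ℕ))
    (T : Q × ℕ → TF Q) : Finset (Q × ℕ) :=
  ((Z.vars ∪ IA).biUnion fun y => ((T y).deactLocs.toFinset).image fun q => (q, 0)) ∪
  (IA.biUnion fun y => ((T y).atomLocs.toFinset).image fun q => (q, 0))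

/-- Number of active variables whose clause contains the atom `q`. -/
noncomputable def copyCount (Z : SemZone Q) (T : Q × ℕ → TF Q) (q : Q) : ℕ :=
  (Z.vars.filter fun y => q ∈ (T y).atomLocs).card

/-- The active variable set of the successor node: `x'_{q,1}` for resets, and
fresh variables `x'_{q,ℓ}` with `2 ≤ ℓ` (smallest free indices) for atoms `q`
of clauses of active variables. -/
noncomputable def succVars (Z : SemZone Q) (IA : Finset (Q × ℕ))
    (T : Q × ℕ → TF Q) : Finset (Q × ℕ) :=
  (((Z.vars ∪ IA).biUnion fun y => (T y).resetLocs.toFinset).image fun q => (q, 1)) ∪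
  ((Z.vars.biUnion fun y => (T y).atomLocs.toFinset).biUnion fun q =>
    (Finset.Icc 2 (copyCount Z T q + 1)).image fun i => (q, i))

/-- The successor computation on nodes:  time elapse, guard intersection,
reset/deactivation with fresh variables, and renaming (canonicalization is
semantically transparent).  `T` assigns to every variable of the node a
disjunct of the transition formula of its location on the letter `a`.  If a
chosen disjunct is `false`, the target is discarded; if all chosen disjuncts
are `true`, the successor is the special empty node. -/
def Succ (𝒜 : OneATA Q A) (Z : SemZone Q) (IA : Finset (Q × ℕ)) (a : A)
    (T : Q × ℕ → TF Q) (Z' : SemZone Q) (IA' : Finset (Q × ℕ)) : Prop :=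
  (∀ y ∈ Z.vars ∪ IA, 𝒜.isTarget y.1 a (T y)) ∧
  (∀ y ∈ Z.vars ∪ IA, T y ≠ TF.ff) ∧
  ((∀ y ∈ Z.vars ∪ IA, T y = TF.tt) → (Z' = emptySemZone ∧ IA' = ∅)) ∧
  ((¬ ∀ y ∈ Z.vars ∪ IA, T y = TF.tt) →
    IA' = succIA Z IA T ∧
    Z'.vars = succVars Z IA T ∧
    ∃ g : (Q × ℕ) → Q → ℕ,
      (∀ y ∈ Z.vars, ∀ q ∈ (T y).atomLocs, 2 ≤ g y q ∧ g y q ≤ copyCount Z T q + 1) ∧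
      (∀ y₁ ∈ Z.vars, ∀ y₂ ∈ Z.vars, ∀ q, q ∈ (T y₁).atomLocs → q ∈ (T y₂).atomLocs →
        g y₁ q = g y₂ q → y₁ = y₂) ∧
      Z'.val = fun ν' => ∃ (ν : (Q × ℕ) → ℝ≥0) (d : ℝ≥0), Z.val ν ∧
        (∀ y ∈ Z.vars, ∀ I ∈ (T y).topGuards, I.mem (ν y + d)) ∧
        (∀ y ∈ Z.vars ∪ IA, ∀ q ∈ (T y).resetLocs, ν' (q, 1) = 0) ∧
        (∀ y ∈ Z.vars, ∀ q ∈ (T y).atomLocs, ν' (q, g y q) = ν y + d))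

/-- Time elapse on a single state. -/
noncomputable def stDelay (s : Q × Option ℝ≥0) (d : ℝ≥0) : Q × Option ℝ≥0 :=
  (s.1, s.2.map (· + d))

/-- `γ →^{d,a,(C₁,…,C_m)} γ'` where the disjuncts chosen in the step correspond,
via a surjection witnessing `γ ∈ ⟦(Z,IA)⟧`, to the target tuple `T` of the node. -/
def StepMatching (𝒜 : OneATA Q A) (Z : SemZone Q) (IA : Finset (Q × ℕ))
    (γ : Config Q) (d : ℝ≥0) (a : A) (T : Q × ℕ → TF Q) (γ' : Config Q) : Prop :=
  ∃ h χ, NodeSatVia Z IA γ h ∧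
    (∀ y ∈ Z.vars ∪ IA, χ (stDelay (h y) d) = T y) ∧
    𝒜.Step γ d a χ γ'

/-- Reachability in the zone graph. -/
inductive ZReach (𝒜 : OneATA Q A) :
    SemZone Q × Finset (Q × ℕ) → SemZone Q × Finset (Q × ℕ) → Prop
  | refl (n) : ZReach 𝒜 n n
  | step {n₁ n₂ n₃} (a : A) (T) :
      ZReach 𝒜 n₁ n₂ → Succ 𝒜 n₂.1 n₂.2 a T n₃.1 n₃.2 → ZReach 𝒜 n₁ n₃

/-- A node is accepting if the locations of all its variables are accepting. -/
def AccNode (𝒜 : OneATA Q A) (Z : SemZone Q) (IA : Finset (Q × ℕ)) : Prop :=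
  ∀ y ∈ Z.vars ∪ IA, y.1 ∈ 𝒜.final

/-! ### Entailment between nodes -/

/-- Node entailment `(Z,IA) ⊨_M (Z',IA')`. -/
def NodeEntails (M : ℕ) (Z : SemZone Q) (IA : Finset (Q × ℕ))
    (Z' : SemZone Q) (IA' : Finset (Q × ℕ)) : Prop :=
  ∀ γ', NodeSat Z' IA' γ' → ∃ γ, NodeSat Z IA γ ∧ CfgEntails M γ γ'

/-- Classical region equivalence between valuations over the variable set `V`. -/
def ValRegEquiv (M : ℕ) (V : Finset (Q × ℕ)) (u u' : (Q × ℕ) → ℝ≥0) : Prop :=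
  (∀ y ∈ V, ((u y ≤ (M : ℝ≥0)) ↔ (u' y ≤ (M : ℝ≥0))) ∧
    (u y ≤ (M : ℝ≥0) →
      (⌊(u y : ℝ)⌋ = ⌊(u' y : ℝ)⌋ ∧ (Int.fract (u y : ℝ) = 0 ↔ Int.fract (u' y : ℝ) = 0)))) ∧
  (∀ y ∈ V, ∀ z ∈ V, u y ≤ (M : ℝ≥0) → u z ≤ (M : ℝ≥0) →
    (Int.fract (u y : ℝ) ≤ Int.fract (u z : ℝ) ↔
      Int.fract (u' y : ℝ) ≤ Int.fract (u' z : ℝ)))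

/-- The bounded entailment check `(Z,IA) ⊨ᵇ_M (Z',IA')`, for zones over the same
variables, using the identity correspondence of variables. -/
def BoundedEntails (M : ℕ) (Z : SemZone Q) (IA : Finset (Q × ℕ))
    (Z' : SemZone Q) (IA' : Finset (Q × ℕ)) : Prop :=
  IA ⊆ IA' ∧ ∀ u', Z'.val u' → ∃ u, Z.val u ∧ ValRegEquiv M Z.vars u u'

/-! ### Syntactic zones -/

/-- Comparison relations in zone constraints. -/
inductive ZRel | lt | le | gt | ge

def ZRel.holds : ZRel → ℝ → ℝ → Prop
  | .lt, x, y => x < y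
  | .le, x, y => x ≤ y
  | .gt, x, y => x > y
  | .ge, x, y => x ≥ y

/-- A zone constraint: `y ∼ k` or `y − x ∼ k` with `k ∈ ℤ`. -/
inductive ZConstr (Q : Type*) where
  | single (y : Q × ℕ) (r : ZRel) (k : ℤ)
  | diff (y x : Q × ℕ) (r : ZRel) (k : ℤ)

def ZConstr.holds (ν : (Q × ℕ) → ℝ≥0) : ZConstr Q → Prop
  | .single y r k => r.holds (ν y : ℝ) (k : ℝ)
  | .diff y x r k => r.holds ((ν y : ℝ) - (ν x : ℝ)) (k : ℝ)

/-- The variables occurring in a constraint. -/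
def ZConstr.varsIn : ZConstr Q → List (Q × ℕ)
  | .single y _ _ => [y]
  | .diff y x _ _ => [y, x]

/-- A (syntactic) zone: a finite set of variables and a finite conjunction of
constraints. -/
structure Zone (Q : Type*) where
  vars : Finset (Q × ℕ)
  constrs : List (ZConstr Q)

def Zone.satBy (Z : Zone Q) (ν : (Q × ℕ) → ℝ≥0) : Prop :=
  ∀ c ∈ Z.constrs, c.holds ν

/-- Constraints only mention variables of the zone. -/
def Zone.wf (Z : Zone Q) : Prop :=
  ∀ c ∈ Z.constrs, ∀ v ∈ c.varsIn, v ∈ Z.vars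

/-- The semantic zone of a syntactic zone. -/
def Zone.toSem (Z : Zone Q) : SemZone Q := ⟨Z.vars, Z.satBy⟩

/-! ### The `N'_r` sets for the entailment check -/

/-- Location preserving one-to-one mapping from `Var(Z)` to `Var(Z')`. -/
def LocPresInj (Z Z' : Zone Q) (r : Q × ℕ → Q × ℕ) : Prop :=
  Set.InjOn r ↑Z.vars ∧ (∀ y ∈ Z.vars, r y ∈ Z'.vars) ∧ ∀ y ∈ Z.vars, (r y).1 = y.1

/-- `γ' ∈ N'_r` : `γ'` satisfies `(Z', IA')` via a surjection whose induced
valuation, transported back along `r`, is region equivalent to no valuation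
satisfying `Z`. -/
def InNr (M : ℕ) (Z Z' : Zone Q) (IA' : Finset (Q × ℕ))
    (r : Q × ℕ → Q × ℕ) (γ' : Config Q) : Prop :=
  ∃ (h' : Q × ℕ → Q × Option ℝ≥0) (ν' : (Q × ℕ) → ℝ≥0),
    (∀ y ∈ Z'.vars ∪ IA', (h' y).1 = y.1) ∧
    (∀ y ∈ Z'.vars ∪ IA', h' y ∈ γ') ∧
    (∀ s ∈ γ', ∃ y ∈ Z'.vars ∪ IA', h' y = s) ∧
    (∀ y ∈ IA', (h' y).2 = none) ∧
    (∀ y ∈ Z'.vars, (h' y).2 = some (ν' y)) ∧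
    Z'.satBy ν' ∧
    ∀ ν, Z.satBy ν → ¬ ValRegEquiv M Z.vars ν (fun y => ν' (r y))

end ZoneDefs


/-! ## The zones `Z_φ` and `Z'_φ` constructed from a monotone 3-CNF formula -/

/-- The two locations `q_x` and `q_y`. -/
inductive XY | qx | qy
deriving DecidableEq

/-- The zone variables used in the reduction, for a formula with `m` clauses:
`px_j, py_j, nx_j, ny_j` (dummy clauses), `x^i_j, y^i_j` (clause literals) for
`Z'_φ`, and `x⁺_j, y⁺_j, x⁻_j, y⁻_j` for `Z_φ`. -/
inductive MVar (m : ℕ) where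
  | px (j : Fin 3)
  | py (j : Fin 3)
  | nx (j : Fin 3)
  | ny (j : Fin 3)
  | xc (i : Fin m) (j : Fin 3)
  | yc (i : Fin m) (j : Fin 3)
  | xp (j : Fin 3)
  | yp (j : Fin 3)
  | xm (j : Fin 3)
  | ym (j : Fin 3)
deriving DecidableEq

section Mono

variable {m : ℕ}

/-- The location of each variable. -/
def MVar.loc : MVar m → XY
  | .px _ | .nx _ | .xc _ _ | .xp _ | .xm _ => .qx
  | .py _ | .ny _ | .yc _ _ | .yp _ | .ym _ => .qy

def MVar.inZ : MVar m → Prop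
  | .xp _ | .yp _ | .xm _ | .ym _ => True
  | _ => False

/-- The variables of `Z_φ`. -/
def ZVars (m : ℕ) : Set (MVar m) := {y | y.inZ}

/-- The variables of `Z'_φ`. -/
def Z'Vars (m : ℕ) : Set (MVar m) := {y | ¬ y.inZ}

/-- `γ` satisfies the node `(Z, ∅)` (zone given semantically by the predicate
`P` on valuations, over the variable set `V`) via the surjection `h`. -/
def MSat (V : Set (MVar m)) (P : (MVar m → ℝ≥0) → Prop) (γ : Config XY)
    (h : MVar m → XY × Option ℝ≥0) : Prop :=
  (∀ y ∈ V, (h y).1 = y.loc) ∧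
  (∀ y ∈ V, h y ∈ γ) ∧
  (∀ s ∈ γ, ∃ y ∈ V, h y = s) ∧
  ∃ ν : MVar m → ℝ≥0, (∀ y ∈ V, (h y).2 = some (ν y)) ∧ P ν

/-- The constraints of the zone `Z_φ` (with `k` positive clauses and `m`
clauses in total). -/
def ZphiSat (m k : ℕ) (ν : MVar m → ℝ≥0) : Prop :=
  (∀ j : Fin 3, 0 ≤ (ν (.yp j) : ℝ) - ν (.xp j) ∧ (ν (.yp j) : ℝ) - ν (.xp j) ≤ 1) ∧
  (∀ j : Fin 3, 1 < (ν (.ym j) : ℝ) - ν (.xm j) ∧ (ν (.ym j) : ℝ) - ν (.xm j) ≤ 2) ∧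
  (∀ j : Fin 2, 1 ≤ (ν (.xp j.succ) : ℝ) - ν (.yp j.castSucc) ∧
      (ν (.xp j.succ) : ℝ) - ν (.yp j.castSucc) ≤ 5) ∧
  (∀ j : Fin 2, 1 ≤ (ν (.xm j.succ) : ℝ) - ν (.ym j.castSucc) ∧
      (ν (.xm j.succ) : ℝ) - ν (.ym j.castSucc) ≤ 5) ∧
  ((ν (.yp 2) : ℝ) < 14 * ((k : ℝ) + 1) - 2) ∧
  ((ν (.xm 0) : ℝ) > 14 * ((k : ℝ) + 1) - 2) ∧
  ((ν (.ym 2) : ℝ) - ν (.xp 0) < 14 * ((m : ℝ) + 2) - 6)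

/-- The constraints of the zone `Z'_φ`, for a monotone 3-CNF formula whose
`i`-th clause has literals on the propositional variables `lits i 0`,
`lits i 1`, `lits i 2`. -/
def Z'phiSat (m : ℕ) {PV : Type*} (lits : Fin m → Fin 3 → PV)
    (ν : MVar m → ℝ≥0) : Prop :=
  (∀ j : Fin 3, (ν (.px j) : ℝ) = 3 * (j : ℕ) ∧ (ν (.py j) : ℝ) = 3 * (j : ℕ)) ∧
  (∀ j : Fin 3, (ν (.nx j) : ℝ) = 14 * ((m : ℝ) + 1) + 3 * (j : ℕ) ∧
      (ν (.ny j) : ℝ) = 14 * ((m : ℝ) + 1) + 3 * (j : ℕ) + 2) ∧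
  (∀ (i : Fin m) (j : Fin 3),
      14 * ((i : ℕ) + 1 : ℝ) + 3 * (j : ℕ) ≤ (ν (.xc i j) : ℝ) ∧
      (ν (.xc i j) : ℝ) ≤ 14 * ((i : ℕ) + 1 : ℝ) + 3 * (j : ℕ) + 2 ∧
      14 * ((i : ℕ) + 1 : ℝ) + 3 * (j : ℕ) ≤ (ν (.yc i j) : ℝ) ∧
      (ν (.yc i j) : ℝ) ≤ 14 * ((i : ℕ) + 1 : ℝ) + 3 * (j : ℕ) + 2 ∧
      (ν (.xc i j) : ℝ) ≤ (ν (.yc i j) : ℝ)) ∧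
  (∀ (i i' : Fin m) (j j' : Fin 3), lits i j = lits i' j' →
      (ν (.xc i' j') : ℝ) - ν (.xc i j) = 14 * (((i' : ℕ) : ℝ) - ((i : ℕ) : ℝ)) +
        3 * (((j' : ℕ) : ℝ) - ((j : ℕ) : ℝ)) ∧
      (ν (.yc i' j') : ℝ) - ν (.yc i j) = 14 * (((i' : ℕ) : ℝ) - ((i : ℕ) : ℝ)) +
        3 * (((j' : ℕ) : ℝ) - ((j : ℕ) : ℝ)))

/-- The (real) value of a state of a configuration. -/
noncomputable def sval (s : XY × Option ℝ≥0) : ℝ := ((s.2.getD 0 : ℝ≥0) : ℝ)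

/-- The assignment `α_{γ'}` extracted from a surjection `h'` witnessing that a
configuration satisfies `(Z'_φ, ∅)`: a propositional variable is true iff the
difference `y − x` of (one of) its literal occurrences exceeds 1. -/
def alphaOf {PV : Type*} (lits : Fin m → Fin 3 → PV)
    (h' : MVar m → XY × Option ℝ≥0) (p : PV) : Prop :=
  ∃ (i : Fin m) (j : Fin 3), lits i j = p ∧
    1 < sval (h' (.yc i j)) - sval (h' (.xc i j))

/-- The assignment `α` falsifies clause `C_i` (clauses `C_1, …, C_k` are
positive, the rest negative): all of its literals are false. -/
def Falsifies {PV : Type*} (k : ℕ) (lits : Fin m → Fin 3 → PV)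
    (α : PV → Prop) (i : Fin m) : Prop :=
  if (i : ℕ) < k then ∀ j : Fin 3, ¬ α (lits i j) else ∀ j : Fin 3, α (lits i j)

/-- The monotone 3-CNF formula is satisfiable. -/
def MonoSatisfiable {PV : Type*} (k : ℕ) (lits : Fin m → Fin 3 → PV) : Prop :=
  ∃ α : PV → Prop, ∀ i : Fin m, ¬ Falsifies k lits α i

end Mono



/-! ## Auxiliary material for Statement 19 -/

section Aux19

open Classical

deriving instance Fintype for MVar

/-- The natural-number valuation used to build `γ'` from an assignment `α`. -/
noncomputable def nval {PV : Type*} (m : ℕ) (lits : Fin m → Fin 3 → PV)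
    (α : PV → Prop) : MVar m → ℕ
  | .px j => 3 * j
  | .py j => 3 * j
  | .nx j => 14 * (m + 1) + 3 * j
  | .ny j => 14 * (m + 1) + 3 * j + 2
  | .xc i j => 14 * ((i : ℕ) + 1) + 3 * j
  | .yc i j => 14 * ((i : ℕ) + 1) + 3 * j + (if α (lits i j) then 2 else 0)
  | _ => 0

lemma nval_le {PV : Type*} (m : ℕ) (lits : Fin m → Fin 3 → PV) (α : PV → Prop)
    (z : MVar m) : nval m lits α z ≤ 14 * m + 22 := by
  cases z with
  | px j => have := j.isLt; simp only [nval]; omega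
  | py j => have := j.isLt; simp only [nval]; omega
  | nx j => have := j.isLt; simp only [nval]; omega
  | ny j => have := j.isLt; simp only [nval]; omega
  | xc i j => have := j.isLt; have := i.isLt; simp only [nval]; omega
  | yc i j => have := j.isLt; have := i.isLt; simp only [nval]; split <;> omega
  | xp j => simp only [nval]; omega
  | yp j => simp only [nval]; omega
  | xm j => simp only [nval]; omega
  | ym j => simp only [nval]; omega

lemma shape_qx {PV : Type*} (m : ℕ) (lits : Fin m → Fin 3 → PV) (α : PV → Prop)
    (z : MVar m) (h1 : ¬ z.inZ) (h2 : z.loc = XY.qx) :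
    ∃ s jj : ℕ, s ≤ m + 1 ∧ jj ≤ 2 ∧ nval m lits α z = 14 * s + 3 * jj := by
  cases z with
  | px j => exact ⟨0, j, by omega, by have := j.isLt; omega, by simp [nval]⟩
  | nx j => exact ⟨m + 1, j, le_refl _, by have := j.isLt; omega, by simp [nval]⟩
  | xc i j => exact ⟨(i : ℕ) + 1, j, by have := i.isLt; omega,
      by have := j.isLt; omega, by simp [nval]⟩
  | py j => simp [MVar.loc] at h2
  | ny j => simp [MVar.loc] at h2
  | yc i j => simp [MVar.loc] at h2
  | xp j => exact absurd trivial h1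
  | yp j => simp [MVar.loc] at h2
  | xm j => exact absurd trivial h1
  | ym j => simp [MVar.loc] at h2

lemma shape_qy {PV : Type*} (m : ℕ) (lits : Fin m → Fin 3 → PV) (α : PV → Prop)
    (z : MVar m) (h1 : ¬ z.inZ) (h2 : z.loc = XY.qy) :
    ∃ (s t : ℕ) (jj : Fin 3), s ≤ m + 1 ∧ (t = 0 ∨ t = 2) ∧
      nval m lits α z = 14 * s + 3 * (jj : ℕ) + t ∧
      (∀ i : Fin m, s = (i : ℕ) + 1 → (t = 2 ↔ α (lits i jj))) := by
  cases z with
  | py j => exact ⟨0, 0, j, by omega, Or.inl rfl, by simp [nval],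
      fun i hi => absurd hi (by omega)⟩
  | ny j => exact ⟨m + 1, 2, j, le_refl _, Or.inr rfl, by simp [nval],
      fun i hi => absurd hi (by have := i.isLt; omega)⟩
  | yc i j =>
      refine ⟨(i : ℕ) + 1, if α (lits i j) then 2 else 0, j,
        by have := i.isLt; omega, by split <;> simp, by simp [nval], ?_⟩
      intro i' hi'
      have : i' = i := Fin.ext (by omega)
      subst this
      split <;> simp_all
  | px j => simp [MVar.loc] at h2
  | nx j => simp [MVar.loc] at h2
  | xc i j => simp [MVar.loc] at h2
  | xp j => exact absurd trivial h1
  | xm j => exact absurd trivial h1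
  | yp j => exact absurd trivial h1
  | ym j => exact absurd trivial h1

/-- The selection of `Z'`-variables for a falsified positive clause. -/
def selPos {m : ℕ} (i₀ : Fin m) : MVar m → MVar m
  | .xp j => .xc i₀ j
  | .yp j => .yc i₀ j
  | .xm j => .nx j
  | .ym j => .ny j
  | y => y

/-- The selection of `Z'`-variables for a falsified negative clause. -/
def selNeg {m : ℕ} (i₀ : Fin m) : MVar m → MVar m
  | .xp j => .px j
  | .yp j => .py j
  | .xm j => .xc i₀ j
  | .ym j => .yc i₀ j
  | y => y

lemma selPos_spec {m : ℕ} (i₀ : Fin m) :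
    ∀ y : MVar m, y.inZ → ¬ (selPos i₀ y).inZ ∧ (selPos i₀ y).loc = y.loc := by
  intro y hy
  cases y <;> first
    | exact absurd hy (fun h => h)
    | exact ⟨fun h => h, rfl⟩

lemma selNeg_spec {m : ℕ} (i₀ : Fin m) :
    ∀ y : MVar m, y.inZ → ¬ (selNeg i₀ y).inZ ∧ (selNeg i₀ y).loc = y.loc := by
  intro y hy
  cases y <;> first
    | exact absurd hy (fun h => h)
    | exact ⟨fun h => h, rfl⟩

/-- Helper for the backward direction: from a `sel`-based selection with values
satisfying `Z_φ`, build a configuration satisfying `(Z_φ, ∅)` that is a subset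
of `γ'` and region equivalent to itself. -/
lemma backward_helper (m k : ℕ) (γ' : Config XY) (h' : MVar m → XY × Option ℝ≥0)
    (ν' : MVar m → ℝ≥0)
    (hl1' : ∀ z : MVar m, ¬ z.inZ → (h' z).1 = z.loc)
    (hmem' : ∀ z : MVar m, ¬ z.inZ → h' z ∈ γ')
    (hν' : ∀ z : MVar m, ¬ z.inZ → (h' z).2 = some (ν' z))
    (sel : MVar m → MVar m)
    (hsel : ∀ y : MVar m, y.inZ → ¬ (sel y).inZ ∧ (sel y).loc = y.loc)
    (hsat : ZphiSat m k (fun y => ν' (sel y))) :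
    ∃ γ : Config XY, (∃ h, MSat (ZVars m) (ZphiSat m k) γ h) ∧ γ ⊆ γ' ∧
      RegionEquiv (14 * (m + 2)) γ γ := by
  classical
  refine ⟨(Finset.univ.filter (fun y : MVar m => y.inZ)).image (fun y => h' (sel y)),
    ⟨fun y => h' (sel y), ?_, ?_, ?_, ⟨fun y => ν' (sel y), ?_, hsat⟩⟩, ?_, ?_⟩
  · intro y hy; rw [hl1' _ (hsel y hy).1, (hsel y hy).2]
  · intro y hy
    exact Finset.mem_image_of_mem _ (Finset.mem_filter.2 ⟨Finset.mem_univ _, hy⟩)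
  · intro s hs
    rcases Finset.mem_image.1 hs with ⟨z, hz, rfl⟩
    exact ⟨z, (Finset.mem_filter.1 hz).2, rfl⟩
  · intro y hy; exact hν' _ (hsel y hy).1
  · intro s hs
    rcases Finset.mem_image.1 hs with ⟨z, hz, rfl⟩
    exact hmem' _ (hsel z (Finset.mem_filter.1 hz).2).1
  · refine ⟨id, Set.bijOn_id _, fun _ _ => rfl, fun _ _ => Iff.rfl, ?_, ?_⟩
    · intro s _ r r' h1 h2
      obtain rfl : r = r' := by
        simp only [id_eq] at h2; rw [h1] at h2; exact Option.some.inj h2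
      exact ⟨Iff.rfl, fun _ => ⟨rfl, Iff.rfl⟩⟩
    · intro s₁ _ s₂ _ r₁ r₂ r₁' r₂' e1 e2 e3 e4 _ _
      obtain rfl : r₁ = r₁' := by
        simp only [id_eq] at e3; rw [e1] at e3; exact Option.some.inj e3
      obtain rfl : r₂ = r₂' := by
        simp only [id_eq] at e4; rw [e2] at e4; exact Option.some.inj e4
      exact Iff.rfl

end Aux19


/-! ## STATEMENT 19 -/

/-- With `M_φ = 14(m+2)`: the monotone 3-CNF formula `φ` is
satisfiable iff `(Z_φ, ∅)` does not entail `(Z'_φ, ∅)` w.r.t. `⊨_{M_φ}`, i.e.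
iff there is a configuration `γ'` satisfying `(Z'_φ, ∅)` such that no
configuration satisfying `(Z_φ, ∅)` is region equivalent to any subset of
`γ'`. -/
theorem statement19 {PV : Type*} (m k : ℕ) (hkm : k ≤ m)
    (lits : Fin m → Fin 3 → PV) :
    MonoSatisfiable k lits ↔
      ∃ γ', (∃ h', MSat (Z'Vars m) (Z'phiSat m lits) γ' h') ∧
        ∀ γ, (∃ h, MSat (ZVars m) (ZphiSat m k) γ h) →
          ∀ γ'' ⊆ γ', ¬ RegionEquiv (14 * (m + 2)) γ γ'' := by
  classical
  constructor
  · rintro ⟨α, hα⟩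
    refine ⟨(Finset.univ.filter (fun y : MVar m => ¬ y.inZ)).image
        (fun y => (y.loc, some ((nval m lits α y : ℝ≥0)))),
      ⟨fun y => (y.loc, some ((nval m lits α y : ℝ≥0))), fun y _ => rfl, ?_, ?_,
        ⟨fun y => ((nval m lits α y : ℝ≥0)), fun y _ => rfl, ?_, ?_, ?_, ?_⟩⟩, ?_⟩
    · intro y hy
      exact Finset.mem_image_of_mem _ (Finset.mem_filter.2 ⟨Finset.mem_univ _, hy⟩)
    · intro s hs
      rcases Finset.mem_image.1 hs with ⟨z, hz, rfl⟩
      exact ⟨z, (Finset.mem_filter.1 hz).2, rfl⟩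
    · intro j
      constructor <;> (simp only [nval]; push_cast; ring)
    · intro j
      constructor <;> (simp only [nval]; push_cast; ring)
    · intro i j
      by_cases hb : α (lits i j) <;>
        (simp only [nval, hb, if_true, if_false]; push_cast;
         refine ⟨by linarith, by linarith, by linarith, by linarith, by linarith⟩)
    · intro i i' j j' hl
      by_cases hb : α (lits i' j')
      · have hb' : α (lits i j) := by rw [hl]; exact hb
        constructor <;> (simp only [nval, hb, hb', if_true]; push_cast; ring)
      · have hb' : ¬ α (lits i j) := by rw [hl]; exact hb
        constructor <;> (simp only [nval, hb, hb', if_false]; push_cast; ring)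
    -- main part of the forward direction
    rintro γ ⟨h, hl1, hl2, hl3, ν, hν, hZ⟩ γ'' hsub ⟨g, hbij, hgl, hgn, hg4, hg5⟩
    have key : ∀ y : MVar m, y.inZ → ∃ z : MVar m, ¬ z.inZ ∧ z.loc = y.loc ∧
        (ν y : ℝ) = ((nval m lits α z : ℕ) : ℝ) := by
      intro y hy
      have hyγ : h y ∈ γ := hl2 y hy
      have hgγ : g (h y) ∈ γ'' := hbij.1 hyγ
      have hgγ' := hsub hgγ
      rcases Finset.mem_image.1 hgγ' with ⟨z, hzf, hze⟩
      have hzZ : ¬ z.inZ := (Finset.mem_filter.1 hzf).2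
      refine ⟨z, hzZ, ?_, ?_⟩
      · have h1 : (g (h y)).1 = (h y).1 := hgl (h y) hyγ
        have h2 : (h y).1 = y.loc := hl1 y hy
        have h3 : z.loc = (g (h y)).1 := by rw [← hze]
        rw [h3, h1, h2]
      · have hval : (g (h y)).2 = some ((nval m lits α z : ℝ≥0)) := by rw [← hze]
        have hsome : (h y).2 = some (ν y) := hν y hy
        obtain ⟨hiff, hfl⟩ := hg4 (h y) hyγ (ν y) ((nval m lits α z : ℝ≥0)) hsome hval
        have hbnd : ((nval m lits α z : ℝ≥0)) ≤ ((14 * (m + 2) : ℕ) : ℝ≥0) := by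
          have := nval_le m lits α z
          exact_mod_cast le_trans this (by omega)
        have hr : ν y ≤ ((14 * (m + 2) : ℕ) : ℝ≥0) := hiff.2 hbnd
        obtain ⟨hfloor, hfr⟩ := hfl hr
        have hz0 : Int.fract (((nval m lits α z : ℝ≥0) : ℝ)) = 0 := by
          rw [NNReal.coe_natCast]; exact Int.fract_natCast _
        have hy0 : Int.fract ((ν y : ℝ)) = 0 := hfr.2 hz0
        have hfe : (⌊(ν y : ℝ)⌋ : ℝ) = (ν y : ℝ) := by
          have hh := Int.floor_add_fract ((ν y : ℝ))
          rw [hy0, add_zero] at hh; exact hh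
        rw [← hfe, hfloor, NNReal.coe_natCast, Int.floor_natCast]
        push_cast; ring
    have keyx : ∀ y : MVar m, y.inZ → y.loc = XY.qx →
        ∃ s jj : ℕ, s ≤ m + 1 ∧ jj ≤ 2 ∧ (ν y : ℝ) = ((14 * s + 3 * jj : ℕ) : ℝ) := by
      intro y hy hl
      obtain ⟨z, hz1, hz2, hz3⟩ := key y hy
      obtain ⟨s, jj, hs, hj, hv⟩ := shape_qx m lits α z hz1 (by rw [hz2, hl])
      exact ⟨s, jj, hs, hj, by rw [hz3, hv]⟩
    have keyy : ∀ y : MVar m, y.inZ → y.loc = XY.qy →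
        ∃ (s t : ℕ) (jj : Fin 3), s ≤ m + 1 ∧ (t = 0 ∨ t = 2) ∧
          (ν y : ℝ) = ((14 * s + 3 * (jj : ℕ) + t : ℕ) : ℝ) ∧
          (∀ i : Fin m, s = (i : ℕ) + 1 → (t = 2 ↔ α (lits i jj))) := by
      intro y hy hl
      obtain ⟨z, hz1, hz2, hz3⟩ := key y hy
      obtain ⟨s, t, jj, hs, ht, hv, hiff⟩ := shape_qy m lits α z hz1 (by rw [hz2, hl])
      exact ⟨s, t, jj, hs, ht, by rw [hz3, hv], hiff⟩
    choose sa ja hsa hja hva using fun j : Fin 3 => keyx (.xp j) trivial rfl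
    choose sc jc hsc hjc hvc using fun j : Fin 3 => keyx (.xm j) trivial rfl
    choose sb tb jb hsb htb hvb hbiff using fun j : Fin 3 => keyy (.yp j) trivial rfl
    choose sd td jd hsd htd hvd hdiff using fun j : Fin 3 => keyy (.ym j) trivial rfl
    obtain ⟨c1, c2, c3, c4, c5, c6, c7⟩ := hZ
    have g1 : ∀ j : Fin 3, 14 * sa j + 3 * ja j ≤ 14 * sb j + 3 * (jb j : ℕ) + tb j ∧
        14 * sb j + 3 * (jb j : ℕ) + tb j ≤ 14 * sa j + 3 * ja j + 1 := by
      intro j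
      have hcon := c1 j
      rw [hva j, hvb j] at hcon
      obtain ⟨hc1, hc2⟩ := hcon
      push_cast at hc1 hc2
      constructor
      · have : ((14 * sa j + 3 * ja j : ℕ) : ℝ) ≤
            ((14 * sb j + 3 * (jb j : ℕ) + tb j : ℕ) : ℝ) := by push_cast; linarith
        exact_mod_cast this
      · have : ((14 * sb j + 3 * (jb j : ℕ) + tb j : ℕ) : ℝ) ≤
            ((14 * sa j + 3 * ja j + 1 : ℕ) : ℝ) := by push_cast; linarith
        exact_mod_cast this
    have g2 : ∀ j : Fin 3, 14 * sc j + 3 * jc j + 1 < 14 * sd j + 3 * (jd j : ℕ) + td j ∧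
        14 * sd j + 3 * (jd j : ℕ) + td j ≤ 14 * sc j + 3 * jc j + 2 := by
      intro j
      have hcon := c2 j
      rw [hvc j, hvd j] at hcon
      obtain ⟨hc1, hc2⟩ := hcon
      push_cast at hc1 hc2
      constructor
      · have : ((14 * sc j + 3 * jc j + 1 : ℕ) : ℝ) <
            ((14 * sd j + 3 * (jd j : ℕ) + td j : ℕ) : ℝ) := by push_cast; linarith
        exact_mod_cast this
      · have : ((14 * sd j + 3 * (jd j : ℕ) + td j : ℕ) : ℝ) ≤
            ((14 * sc j + 3 * jc j + 2 : ℕ) : ℝ) := by push_cast; linarith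
        exact_mod_cast this
    have e0c : ((0 : Fin 2).castSucc) = (0 : Fin 3) := rfl
    have e0s : ((0 : Fin 2).succ) = (1 : Fin 3) := rfl
    have e1c : ((1 : Fin 2).castSucc) = (1 : Fin 3) := rfl
    have e1s : ((1 : Fin 2).succ) = (2 : Fin 3) := rfl
    have g3a : 14 * sb 0 + 3 * (jb 0 : ℕ) + tb 0 + 1 ≤ 14 * sa 1 + 3 * ja 1 ∧
        14 * sa 1 + 3 * ja 1 ≤ 14 * sb 0 + 3 * (jb 0 : ℕ) + tb 0 + 5 := by
      have hcon := c3 0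
      rw [e0s, e0c, hva 1, hvb 0] at hcon
      obtain ⟨hc1, hc2⟩ := hcon
      push_cast at hc1 hc2
      constructor
      · have : ((14 * sb 0 + 3 * (jb 0 : ℕ) + tb 0 + 1 : ℕ) : ℝ) ≤
            ((14 * sa 1 + 3 * ja 1 : ℕ) : ℝ) := by push_cast; linarith
        exact_mod_cast this
      · have : ((14 * sa 1 + 3 * ja 1 : ℕ) : ℝ) ≤
            ((14 * sb 0 + 3 * (jb 0 : ℕ) + tb 0 + 5 : ℕ) : ℝ) := by push_cast; linarith
        exact_mod_cast this
    have g3b : 14 * sb 1 + 3 * (jb 1 : ℕ) + tb 1 + 1 ≤ 14 * sa 2 + 3 * ja 2 ∧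
        14 * sa 2 + 3 * ja 2 ≤ 14 * sb 1 + 3 * (jb 1 : ℕ) + tb 1 + 5 := by
      have hcon := c3 1
      rw [e1s, e1c, hva 2, hvb 1] at hcon
      obtain ⟨hc1, hc2⟩ := hcon
      push_cast at hc1 hc2
      constructor
      · have : ((14 * sb 1 + 3 * (jb 1 : ℕ) + tb 1 + 1 : ℕ) : ℝ) ≤
            ((14 * sa 2 + 3 * ja 2 : ℕ) : ℝ) := by push_cast; linarith
        exact_mod_cast this
      · have : ((14 * sa 2 + 3 * ja 2 : ℕ) : ℝ) ≤
            ((14 * sb 1 + 3 * (jb 1 : ℕ) + tb 1 + 5 : ℕ) : ℝ) := by push_cast; linarith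
        exact_mod_cast this
    have g4a : 14 * sd 0 + 3 * (jd 0 : ℕ) + td 0 + 1 ≤ 14 * sc 1 + 3 * jc 1 ∧
        14 * sc 1 + 3 * jc 1 ≤ 14 * sd 0 + 3 * (jd 0 : ℕ) + td 0 + 5 := by
      have hcon := c4 0
      rw [e0s, e0c, hvc 1, hvd 0] at hcon
      obtain ⟨hc1, hc2⟩ := hcon
      push_cast at hc1 hc2
      constructor
      · have : ((14 * sd 0 + 3 * (jd 0 : ℕ) + td 0 + 1 : ℕ) : ℝ) ≤
            ((14 * sc 1 + 3 * jc 1 : ℕ) : ℝ) := by push_cast; linarith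
        exact_mod_cast this
      · have : ((14 * sc 1 + 3 * jc 1 : ℕ) : ℝ) ≤
            ((14 * sd 0 + 3 * (jd 0 : ℕ) + td 0 + 5 : ℕ) : ℝ) := by push_cast; linarith
        exact_mod_cast this
    have g4b : 14 * sd 1 + 3 * (jd 1 : ℕ) + td 1 + 1 ≤ 14 * sc 2 + 3 * jc 2 ∧
        14 * sc 2 + 3 * jc 2 ≤ 14 * sd 1 + 3 * (jd 1 : ℕ) + td 1 + 5 := by
      have hcon := c4 1
      rw [e1s, e1c, hvc 2, hvd 1] at hcon
      obtain ⟨hc1, hc2⟩ := hcon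
      push_cast at hc1 hc2
      constructor
      · have : ((14 * sd 1 + 3 * (jd 1 : ℕ) + td 1 + 1 : ℕ) : ℝ) ≤
            ((14 * sc 2 + 3 * jc 2 : ℕ) : ℝ) := by push_cast; linarith
        exact_mod_cast this
      · have : ((14 * sc 2 + 3 * jc 2 : ℕ) : ℝ) ≤
            ((14 * sd 1 + 3 * (jd 1 : ℕ) + td 1 + 5 : ℕ) : ℝ) := by push_cast; linarith
        exact_mod_cast this
    have g5 : 14 * sb 2 + 3 * (jb 2 : ℕ) + tb 2 + 2 < 14 * (k + 1) := by
      have hcon := c5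
      rw [hvb 2] at hcon
      push_cast at hcon
      have : ((14 * sb 2 + 3 * (jb 2 : ℕ) + tb 2 + 2 : ℕ) : ℝ) <
          ((14 * (k + 1) : ℕ) : ℝ) := by push_cast; linarith
      exact_mod_cast this
    have g6 : 14 * (k + 1) < 14 * sc 0 + 3 * jc 0 + 2 := by
      have hcon := c6
      rw [hvc 0] at hcon
      push_cast at hcon
      have : ((14 * (k + 1) : ℕ) : ℝ) <
          ((14 * sc 0 + 3 * jc 0 + 2 : ℕ) : ℝ) := by push_cast; linarith
      exact_mod_cast this
    have g7 : 14 * sd 2 + 3 * (jd 2 : ℕ) + td 2 + 6 <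
        14 * sa 0 + 3 * ja 0 + 14 * (m + 2) := by
      have hcon := c7
      rw [hva 0, hvd 2] at hcon
      push_cast at hcon
      have : ((14 * sd 2 + 3 * (jd 2 : ℕ) + td 2 + 6 : ℕ) : ℝ) <
          ((14 * sa 0 + 3 * ja 0 + 14 * (m + 2) : ℕ) : ℝ) := by push_cast; linarith
      exact_mod_cast this
    have key2 : sb 0 = sa 0 ∧ sb 1 = sa 0 ∧ sb 2 = sa 0 ∧
        tb 0 = 0 ∧ tb 1 = 0 ∧ tb 2 = 0 ∧
        (jb 0 : ℕ) = 0 ∧ (jb 1 : ℕ) = 1 ∧ (jb 2 : ℕ) = 2 ∧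
        sd 0 = sc 0 ∧ sd 1 = sc 0 ∧ sd 2 = sc 0 ∧
        td 0 = 2 ∧ td 1 = 2 ∧ td 2 = 2 ∧
        (jd 0 : ℕ) = 0 ∧ (jd 1 : ℕ) = 1 ∧ (jd 2 : ℕ) = 2 ∧
        sa 0 ≤ k ∧ k + 1 ≤ sc 0 ∧ sc 0 ≤ m + 1 ∧ (1 ≤ sa 0 ∨ sc 0 ≤ m) := by
      have G10 := g1 0; have G11 := g1 1; have G12 := g1 2
      have G20 := g2 0; have G21 := g2 1; have G22 := g2 2
      have B0 := (jb 0).isLt; have B1 := (jb 1).isLt; have B2 := (jb 2).isLt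
      have D0 := (jd 0).isLt; have D1 := (jd 1).isLt; have D2 := (jd 2).isLt
      have JA0 := hja 0; have JA1 := hja 1; have JA2 := hja 2
      have JC0 := hjc 0; have JC1 := hjc 1; have JC2 := hjc 2
      have T0 := htb 0; have T1 := htb 1; have T2 := htb 2
      have U0 := htd 0; have U1 := htd 1; have U2 := htd 2
      have SC0 := hsc 0
      have L10 : sb 0 = sa 0 ∧ tb 0 = 0 ∧ (jb 0 : ℕ) = ja 0 := by
        clear * - G10 T0 B0 JA0
        rcases Nat.lt_trichotomy (sb 0) (sa 0) with h | h | h <;> omega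
      have L11 : sb 1 = sa 1 ∧ tb 1 = 0 ∧ (jb 1 : ℕ) = ja 1 := by
        clear * - G11 T1 B1 JA1
        rcases Nat.lt_trichotomy (sb 1) (sa 1) with h | h | h <;> omega
      have L12 : sb 2 = sa 2 ∧ tb 2 = 0 ∧ (jb 2 : ℕ) = ja 2 := by
        clear * - G12 T2 B2 JA2
        rcases Nat.lt_trichotomy (sb 2) (sa 2) with h | h | h <;> omega
      have L20 : sd 0 = sc 0 ∧ td 0 = 2 ∧ (jd 0 : ℕ) = jc 0 := by
        clear * - G20 U0 D0 JC0
        rcases Nat.lt_trichotomy (sd 0) (sc 0) with h | h | h <;> omega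
      have L21 : sd 1 = sc 1 ∧ td 1 = 2 ∧ (jd 1 : ℕ) = jc 1 := by
        clear * - G21 U1 D1 JC1
        rcases Nat.lt_trichotomy (sd 1) (sc 1) with h | h | h <;> omega
      have L22 : sd 2 = sc 2 ∧ td 2 = 2 ∧ (jd 2 : ℕ) = jc 2 := by
        clear * - G22 U2 D2 JC2
        rcases Nat.lt_trichotomy (sd 2) (sc 2) with h | h | h <;> omega
      have L3 : sa 1 = sa 0 ∧ sa 2 = sa 0 ∧ ja 0 = 0 ∧ ja 1 = 1 ∧ ja 2 = 2 := by
        clear * - g3a g3b L10 L11 L12 JA0 JA1 JA2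
        rcases Nat.lt_trichotomy (sa 1) (sa 0) with h | h | h <;>
          rcases Nat.lt_trichotomy (sa 2) (sa 1) with h' | h' | h' <;> omega
      have L4 : sc 1 = sc 0 ∧ sc 2 = sc 0 ∧ jc 0 = 0 ∧ jc 1 = 1 ∧ jc 2 = 2 := by
        clear * - g4a g4b L20 L21 L22 JC0 JC1 JC2
        rcases Nat.lt_trichotomy (sc 1) (sc 0) with h | h | h <;>
          rcases Nat.lt_trichotomy (sc 2) (sc 1) with h' | h' | h' <;> omega
      clear * - L10 L11 L12 L20 L21 L22 L3 L4 g5 g6 g7 hkm SC0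
      omega
    obtain ⟨e1, e2, e3, e4, e5, e6, e7, e8, e9, f1, f2, f3, f4, f5, f6, f7, f8, f9,
      hsak, hksc, hscm1, hcase⟩ := key2
    rcases hcase with hpos | hneg
    · have hm1 : sa 0 - 1 < m := by omega
      refine hα ⟨sa 0 - 1, hm1⟩ ?_
      have hik : ((⟨sa 0 - 1, hm1⟩ : Fin m) : ℕ) < k := by show sa 0 - 1 < k; omega
      unfold Falsifies
      rw [if_pos hik]
      have h0 : ¬ α (lits ⟨sa 0 - 1, hm1⟩ (jb 0)) := by
        intro hc
        have := (hbiff 0 ⟨sa 0 - 1, hm1⟩ (by show sb 0 = sa 0 - 1 + 1; omega)).2 hc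
        omega
      have h1 : ¬ α (lits ⟨sa 0 - 1, hm1⟩ (jb 1)) := by
        intro hc
        have := (hbiff 1 ⟨sa 0 - 1, hm1⟩ (by show sb 1 = sa 0 - 1 + 1; omega)).2 hc
        omega
      have h2 : ¬ α (lits ⟨sa 0 - 1, hm1⟩ (jb 2)) := by
        intro hc
        have := (hbiff 2 ⟨sa 0 - 1, hm1⟩ (by show sb 2 = sa 0 - 1 + 1; omega)).2 hc
        omega
      have hjb0 : jb 0 = (0 : Fin 3) := Fin.ext (by simpa using e7)
      have hjb1 : jb 1 = (1 : Fin 3) := Fin.ext (by simpa using e8)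
      have hjb2 : jb 2 = (2 : Fin 3) := Fin.ext (by simpa using e9)
      intro j
      have h3 : j = 0 ∨ j = 1 ∨ j = 2 := by
        rcases j with ⟨jv, hv⟩
        interval_cases jv
        · exact Or.inl rfl
        · exact Or.inr (Or.inl rfl)
        · exact Or.inr (Or.inr rfl)
      rcases h3 with rfl | rfl | rfl
      · rwa [hjb0] at h0
      · rwa [hjb1] at h1
      · rwa [hjb2] at h2
    · have hm1 : sc 0 - 1 < m := by omega
      refine hα ⟨sc 0 - 1, hm1⟩ ?_
      have hik : ¬ ((⟨sc 0 - 1, hm1⟩ : Fin m) : ℕ) < k := by show ¬ sc 0 - 1 < k; omega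
      unfold Falsifies
      rw [if_neg hik]
      have h0 : α (lits ⟨sc 0 - 1, hm1⟩ (jd 0)) :=
        (hdiff 0 ⟨sc 0 - 1, hm1⟩ (by show sd 0 = sc 0 - 1 + 1; omega)).1 f4
      have h1 : α (lits ⟨sc 0 - 1, hm1⟩ (jd 1)) :=
        (hdiff 1 ⟨sc 0 - 1, hm1⟩ (by show sd 1 = sc 0 - 1 + 1; omega)).1 f5
      have h2 : α (lits ⟨sc 0 - 1, hm1⟩ (jd 2)) :=
        (hdiff 2 ⟨sc 0 - 1, hm1⟩ (by show sd 2 = sc 0 - 1 + 1; omega)).1 f6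
      have hjd0 : jd 0 = (0 : Fin 3) := Fin.ext (by simpa using f7)
      have hjd1 : jd 1 = (1 : Fin 3) := Fin.ext (by simpa using f8)
      have hjd2 : jd 2 = (2 : Fin 3) := Fin.ext (by simpa using f9)
      intro j
      have h3 : j = 0 ∨ j = 1 ∨ j = 2 := by
        rcases j with ⟨jv, hv⟩
        interval_cases jv
        · exact Or.inl rfl
        · exact Or.inr (Or.inl rfl)
        · exact Or.inr (Or.inr rfl)
      rcases h3 with rfl | rfl | rfl
      · rwa [hjd0] at h0
      · rwa [hjd1] at h1
      · rwa [hjd2] at h2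
  · rintro ⟨γ', ⟨h', hm1', hm2', hm3', ν', hν', hZ'⟩, hno⟩
    by_contra hns
    simp only [MonoSatisfiable, not_exists, not_forall, not_not] at hns
    obtain ⟨i₀, hfal⟩ := hns (alphaOf lits h')
    obtain ⟨d1, d2, d3, d4⟩ := hZ'
    have hloc'' : ∀ z : MVar m, ¬ z.inZ → (h' z).1 = z.loc := fun z hz => hm1' z hz
    have hmem'' : ∀ z : MVar m, ¬ z.inZ → h' z ∈ γ' := fun z hz => hm2' z hz
    have hν'' : ∀ z : MVar m, ¬ z.inZ → (h' z).2 = some (ν' z) := fun z hz => hν' z hz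
    have hsval : ∀ z : MVar m, ¬ z.inZ → sval (h' z) = (ν' z : ℝ) := by
      intro z hz
      simp only [sval, hν'' z hz]
      rfl
    have nzyc : ∀ (i : Fin m) (j : Fin 3), ¬ (MVar.yc i j).inZ := fun _ _ h => h
    have nzxc : ∀ (i : Fin m) (j : Fin 3), ¬ (MVar.xc i j).inZ := fun _ _ h => h
    have hkmR : (k : ℝ) ≤ (m : ℝ) := by exact_mod_cast hkm
    have e2' : ((2 : Fin 3) : ℕ) = 2 := rfl
    have e0' : ((0 : Fin 3) : ℕ) = 0 := rfl
    by_cases hik : (i₀ : ℕ) < k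
    · have hfal' : ∀ j : Fin 3, ¬ alphaOf lits h' (lits i₀ j) := by
        unfold Falsifies at hfal
        rwa [if_pos hik] at hfal
      have hub : ∀ j : Fin 3, (ν' (.yc i₀ j) : ℝ) ≤ (ν' (.xc i₀ j) : ℝ) + 1 := by
        intro j
        by_contra hlt
        push_neg at hlt
        exact hfal' j ⟨i₀, j, rfl, by
          rw [hsval _ (nzyc i₀ j), hsval _ (nzxc i₀ j)]; linarith⟩
      have hikR : ((i₀ : ℕ) : ℝ) + 1 ≤ (k : ℝ) := by exact_mod_cast hik
      have hsat : ZphiSat m k (fun y => ν' (selPos i₀ y)) := by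
        refine ⟨?_, ?_, ?_, ?_, ?_, ?_, ?_⟩
        · intro j
          have h3 := d3 i₀ j
          have h4 := hub j
          exact ⟨by simp only [selPos]; linarith [h3.2.2.2.2],
            by simp only [selPos]; linarith⟩
        · intro j
          have ha := d2 j
          constructor <;> (simp only [selPos]; linarith [ha.1, ha.2])
        · intro j
          have ha := d3 i₀ j.succ
          have hb := d3 i₀ j.castSucc
          rw [Fin.val_succ] at ha
          rw [Fin.coe_castSucc] at hb
          push_cast at ha hb
          constructor <;>
            (simp only [selPos]; push_cast;
             linarith [ha.1, ha.2.1, hb.2.2.1, hb.2.2.2.1])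
        · intro j
          have ha := d2 j.succ
          have hb := d2 j.castSucc
          rw [Fin.val_succ] at ha
          rw [Fin.coe_castSucc] at hb
          push_cast at ha hb
          constructor <;>
            (simp only [selPos]; push_cast; linarith [ha.1, hb.2])
        · simp only [selPos]
          have h3 := (d3 i₀ 2).2.2.2.1
          rw [e2'] at h3
          push_cast at h3
          linarith
        · simp only [selPos]
          have h2 := (d2 0).1
          rw [e0'] at h2
          push_cast at h2
          linarith
        · simp only [selPos]
          have ha := (d2 2).2
          have hb := (d3 i₀ 0).1
          rw [e2'] at ha
          rw [e0'] at hb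
          have hge : (0:ℝ) ≤ ((i₀ : ℕ) : ℝ) := Nat.cast_nonneg _
          push_cast at ha hb
          linarith
      obtain ⟨γ₀, hw, hsub0, heqv⟩ := backward_helper m k γ' h' ν' hloc'' hmem'' hν''
        (selPos i₀) (selPos_spec i₀) hsat
      exact hno γ₀ hw γ₀ hsub0 heqv
    · have hfal' : ∀ j : Fin 3, alphaOf lits h' (lits i₀ j) := by
        unfold Falsifies at hfal
        rwa [if_neg hik] at hfal
      have hlb : ∀ j : Fin 3, 1 < (ν' (.yc i₀ j) : ℝ) - (ν' (.xc i₀ j) : ℝ) := by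
        intro j
        obtain ⟨i1, j1, hl, hgt⟩ := hfal' j
        rw [hsval _ (nzyc i1 j1), hsval _ (nzxc i1 j1)] at hgt
        have hd := d4 i1 i₀ j1 j hl
        linarith [hd.1, hd.2]
      have hknR : (k : ℝ) ≤ ((i₀ : ℕ) : ℝ) := by exact_mod_cast Nat.le_of_not_lt hik
      have him : ((i₀ : ℕ) : ℝ) + 1 ≤ (m : ℝ) := by exact_mod_cast i₀.isLt
      have hsat : ZphiSat m k (fun y => ν' (selNeg i₀ y)) := by
        refine ⟨?_, ?_, ?_, ?_, ?_, ?_, ?_⟩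
        · intro j
          have ha := d1 j
          constructor <;> (simp only [selNeg]; linarith [ha.1, ha.2])
        · intro j
          have h3 := d3 i₀ j
          have h4 := hlb j
          exact ⟨by simp only [selNeg]; linarith,
            by simp only [selNeg]; linarith [h3.1, h3.2.2.2.1]⟩
        · intro j
          have ha := d1 j.succ
          have hb := d1 j.castSucc
          rw [Fin.val_succ] at ha
          rw [Fin.coe_castSucc] at hb
          push_cast at ha hb
          constructor <;> (simp only [selNeg]; push_cast; linarith [ha.1, hb.2])
        · intro j
          have ha := d3 i₀ j.succ
          have hb := d3 i₀ j.castSucc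
          rw [Fin.val_succ] at ha
          rw [Fin.coe_castSucc] at hb
          push_cast at ha hb
          constructor <;>
            (simp only [selNeg]; push_cast;
             linarith [ha.1, ha.2.1, hb.2.2.1, hb.2.2.2.1])
        · simp only [selNeg]
          have ha := (d1 2).2
          rw [e2'] at ha
          push_cast at ha
          have hge : (0:ℝ) ≤ (k : ℝ) := Nat.cast_nonneg _
          linarith
        · simp only [selNeg]
          have hb := (d3 i₀ 0).1
          rw [e0'] at hb
          push_cast at hb
          linarith
        · simp only [selNeg]
          have ha := (d3 i₀ 2).2.2.2.1
          have hb := (d1 0).1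
          rw [e2'] at ha
          rw [e0'] at hb
          push_cast at ha hb
          linarith
      obtain ⟨γ₀, hw, hsub0, heqv⟩ := backward_helper m k γ' h' ν' hloc'' hmem'' hν''
        (selNeg i₀) (selNeg_spec i₀) hsat
      exact hno γ₀ hw γ₀ hsub0 heqv
end ATAPaper
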